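/- arXiv:2312.06595 — 2 statements merged into one kernel-verified Lean document; each statement's English description precedes it below -/
import Mathlib

section
/- The centred triangular maximal operator 𝒯 is bounded on L^p(𝔗) for every p in [1, ∞]. -/
open scoped ENNReal NNReal
open Set

/-- A locally finite tree presented via the data induced by a fixed geodesic ray `ω`:
a predecessor map `pred`, a height (Busemann) function `ht` increasing by one along `pred`,
finite successor sets, and connectedness (any two vertices have a common ancestor). -/
structure TreeData (V : Type*) where
  pred : V → V
  ht : V → ℤ
  ht_pred : ∀ x, ht (pred x) = ht x + 1
  fiber_finite : ∀ x, {y | pred y = x}.Finite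
  connected : ∀ x y, ∃ k l : ℕ, pred^[k] x = pred^[l] y

namespace TreeData

variable {V : Type*}

/-- The set of successors of a vertex. -/
def succs (t : TreeData V) (x : V) : Set V := {y | t.pred y = x}

/-- Every vertex has at least 3 neighbours, i.e. at least 2 successors. -/
def Thick (t : TreeData V) : Prop := ∀ x, 2 ≤ (t.succs x).ncard

/-- Homogeneous tree `𝔗_b`: every vertex has exactly `b+1` neighbours, i.e. `b` successors. -/
def Homog (t : TreeData V) (b : ℕ) : Prop := ∀ x, (t.succs x).ncard = b

/-- The triangle with vertex `x` and height `R`: all descendants of `x` within `R` generations. -/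
def tri (t : TreeData V) (x : V) (R : ℕ) : Set V := {y | ∃ j ≤ R, t.pred^[j] y = x}

/-- The base of the triangle with vertex `x` and height `R`: the `R`-fold successors of `x`. -/
def base (t : TreeData V) (x : V) (R : ℕ) : Set V := {y | t.pred^[R] y = x}

/-- The graph distance on the tree. -/
noncomputable def dist (t : TreeData V) (x y : V) : ℕ :=
  sInf {n | ∃ k l : ℕ, k + l = n ∧ t.pred^[k] x = t.pred^[l] y}

/-- Number of points of a set, as an element of `ℝ≥0∞` (counting measure). -/
noncomputable def esize (E : Set V) : ℝ≥0∞ := ∑' _ : E, (1 : ℝ≥0∞)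

/-- The average of `|f|` over a set, with respect to counting measure. -/
noncomputable def setAvg (t : TreeData V) (S : Set V) (f : V → ℝ) : ℝ≥0∞ :=
  (∑' y : S, (‖f y‖₊ : ℝ≥0∞)) / (S.ncard : ℝ≥0∞)

/-- The centred triangular maximal operator `𝒯`. -/
noncomputable def cmax (t : TreeData V) (f : V → ℝ) (x : V) : ℝ≥0∞ :=
  ⨆ R : ℕ, t.setAvg (t.tri x R) f

/-- The uncentred triangular maximal operator `𝒰`. -/
noncomputable def umax (t : TreeData V) (f : V → ℝ) (x : V) : ℝ≥0∞ :=
  ⨆ (v : V) (R : ℕ) (_ : x ∈ t.tri v R), t.setAvg (t.tri v R) f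

/-- The uncentred base maximal operator `ℬᵘ`. -/
noncomputable def ubmax (t : TreeData V) (f : V → ℝ) (x : V) : ℝ≥0∞ :=
  ⨆ (v : V) (R : ℕ) (_ : x ∈ t.tri v R), t.setAvg (t.base v R) f

/-- The modified triangle `T'_r(x) = T_r(x) ∪ {p^r(x)}`. -/
def mtri (t : TreeData V) (x : V) (r : ℕ) : Set V := t.tri x r ∪ {t.pred^[r] x}

/-- The modified centred triangular maximal operator `𝒯'`. -/
noncomputable def cmax' (t : TreeData V) (f : V → ℝ) (x : V) : ℝ≥0∞ :=
  ⨆ r : ℕ, t.setAvg (t.mtri x r) f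

/-- The modified uncentred triangular maximal operator `𝒰'`. -/
noncomputable def umax' (t : TreeData V) (f : V → ℝ) (x : V) : ℝ≥0∞ :=
  ⨆ (v : V) (r : ℕ) (_ : x ∈ t.mtri v r), t.setAvg (t.mtri v r) f

/-- The `ℓ^p` norm with respect to counting measure, for `p ∈ [1,∞]`. -/
noncomputable def eLp (p : ℝ≥0∞) (g : V → ℝ≥0∞) : ℝ≥0∞ :=
  if p = ∞ then ⨆ v, g v else (∑' v, g v ^ p.toReal) ^ (1 / p.toReal)

/-- `|f|` as an `ℝ≥0∞`-valued function. -/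
noncomputable def nn (f : V → ℝ) (x : V) : ℝ≥0∞ := (‖f x‖₊ : ℝ≥0∞)

/-- The point mass at `o`. -/
noncomputable def delta (o : V) : V → ℝ := ({o} : Set V).indicator fun _ => 1

end TreeData


section Aux

namespace TreeData

variable {V : Type*}

lemma mem_tri_self (t : TreeData V) (x : V) (R : ℕ) : x ∈ t.tri x R :=
  ⟨0, Nat.zero_le _, rfl⟩

lemma base_succ (t : TreeData V) (x : V) (R : ℕ) :
    t.base x (R+1) = t.pred ⁻¹' (t.base x R) := by
  ext y; simp [base, Function.iterate_succ_apply]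

lemma base_finite (t : TreeData V) (x : V) (R : ℕ) : (t.base x R).Finite := by
  induction R with
  | zero =>
      have h : t.base x 0 = {x} := by ext y; simp [base]
      rw [h]; exact Set.finite_singleton x
  | succ R ih =>
      rw [base_succ]
      have h2 : t.pred ⁻¹' (t.base x R) = ⋃ z ∈ t.base x R, {y | t.pred y = z} := by
        ext y; simp
      rw [h2]
      exact ih.biUnion fun z _ => t.fiber_finite z

lemma tri_eq (t : TreeData V) (x : V) (R : ℕ) :
    t.tri x R = ⋃ j ∈ Finset.range (R+1), t.base x j := by
  ext y; simp [tri, base, Nat.lt_succ_iff]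

lemma tri_finite (t : TreeData V) (x : V) (R : ℕ) : (t.tri x R).Finite := by
  rw [tri_eq]
  exact Set.Finite.biUnion (Finset.range (R+1)).finite_toSet fun j _ => t.base_finite x j

lemma two_pow_le_ncard_base (t : TreeData V) (hthick : t.Thick) (x : V) :
    (R : ℕ) → 2 ^ R ≤ (t.base x R).ncard := by
  intro R
  induction R with
  | zero =>
      have h : t.base x 0 = {x} := by ext y; simp [base]
      simp [h]
  | succ R ih =>
      classical
      have hB := t.base_finite x R
      set B := hB.toFinset with hBdef
      set F : V → Finset V := fun z => (t.fiber_finite z).toFinset with hFdef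
      have hset : t.base x (R+1) = ↑(B.biUnion F) := by
        rw [base_succ]
        ext y
        simp [hBdef, hFdef, Set.Finite.mem_toFinset, base]
      have hdisj : ∀ z ∈ B, ∀ z' ∈ B, z ≠ z' → Disjoint (F z) (F z') := by
        intro z _ z' _ hne
        rw [Finset.disjoint_left]
        intro y hy hy'
        simp only [hFdef, Set.Finite.mem_toFinset, Set.mem_setOf_eq] at hy hy'
        exact hne (hy ▸ hy')
      have hcard : (t.base x (R+1)).ncard = (B.biUnion F).card := by
        rw [hset, Set.ncard_coe_finset]
      rw [hcard, Finset.card_biUnion hdisj]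
      have h2 : ∀ z ∈ B, 2 ≤ (F z).card := by
        intro z _
        have := hthick z
        rwa [show (t.succs z).ncard = (F z).card from
          Set.ncard_eq_toFinset_card _ (t.fiber_finite z)] at this
      calc 2 ^ (R+1) = 2 ^ R * 2 := by ring
        _ ≤ B.card * 2 := by
            have h3 : 2 ^ R ≤ B.card := by
              rwa [Set.ncard_eq_toFinset_card _ hB] at ih
            exact Nat.mul_le_mul_right 2 h3
        _ = ∑ _z ∈ B, 2 := by rw [Finset.sum_const, smul_eq_mul, mul_comm]
        _ ≤ ∑ z ∈ B, (F z).card := Finset.sum_le_sum h2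

lemma two_pow_le_ncard_tri (t : TreeData V) (hthick : t.Thick) (x : V) (R : ℕ) :
    2 ^ R ≤ (t.tri x R).ncard := by
  refine le_trans (t.two_pow_le_ncard_base hthick x R) ?_
  refine Set.ncard_le_ncard ?_ (t.tri_finite x R)
  intro y hy
  exact ⟨R, le_refl _, hy⟩

lemma tsum_set_eq_sum {S : Set V} (hS : S.Finite) (b : V → ℝ≥0∞) :
    ∑' y : S, b y = ∑ y ∈ hS.toFinset, b y := by
  rw [tsum_subtype]
  rw [tsum_eq_sum (s := hS.toFinset)
    (fun v hv => Set.indicator_of_notMem (by simpa using hv) _)]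
  exact Finset.sum_congr rfl fun v hv => Set.indicator_of_mem (by simpa using hv) _

lemma avg_rpow_le {q : ℝ} (hq : 1 ≤ q) {S : Set V} (hS : S.Finite) (hne : S.Nonempty)
    (a : V → ℝ≥0∞) :
    ((∑' y : S, a y) / (S.ncard : ℝ≥0∞)) ^ q ≤ (∑' y : S, a y ^ q) / (S.ncard : ℝ≥0∞) := by
  classical
  set F := hS.toFinset with hF
  have hcard : (S.ncard : ℝ≥0∞) = (F.card : ℝ≥0∞) := by
    rw [Set.ncard_eq_toFinset_card _ hS]
  set n : ℝ≥0∞ := (S.ncard : ℝ≥0∞) with hn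
  have hn0 : n ≠ 0 := by
    simp only [hn, Nat.cast_ne_zero]
    exact ((Set.ncard_pos hS).mpr hne).ne'
  have hnt : n ≠ ⊤ := ENNReal.natCast_ne_top _
  have hw : ∑ _y ∈ F, n⁻¹ = 1 := by
    rw [Finset.sum_const, nsmul_eq_mul, ← hcard, ENNReal.mul_inv_cancel hn0 hnt]
  have key := ENNReal.rpow_arith_mean_le_arith_mean_rpow F (fun _ => n⁻¹) a hw hq
  calc ((∑' y : S, a y) / n) ^ q
      = (∑ y ∈ F, n⁻¹ * a y) ^ q := by
        rw [tsum_set_eq_sum hS, ← Finset.mul_sum, div_eq_mul_inv, mul_comm]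
    _ ≤ ∑ y ∈ F, n⁻¹ * a y ^ q := key
    _ = (∑' y : S, a y ^ q) / n := by
        rw [tsum_set_eq_sum hS (fun y => a y ^ q), ← Finset.mul_sum, div_eq_mul_inv,
          mul_comm]

lemma iSup_rpow_le_tsum {q : ℝ} (hq : 1 ≤ q) (a : ℕ → ℝ≥0∞) :
    (⨆ R, a R) ^ q ≤ ∑' R, a R ^ q := by
  have hq0 : 0 < q := lt_of_lt_of_le one_pos hq
  set s := ∑' R, a R ^ q with hs
  have h1 : ∀ R, a R ≤ s ^ (1/q) := by
    intro R
    have h2 : a R ^ q ≤ s := ENNReal.le_tsum R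
    have h3 := ENNReal.rpow_le_rpow h2 (le_of_lt (by positivity : (0:ℝ) < 1/q))
    rwa [← ENNReal.rpow_mul, mul_one_div, div_self hq0.ne', ENNReal.rpow_one] at h3
  have h4 : (⨆ R, a R) ≤ s ^ (1/q) := iSup_le h1
  have h5 := ENNReal.rpow_le_rpow h4 hq0.le
  rwa [← ENNReal.rpow_mul, one_div_mul_cancel hq0.ne', ENNReal.rpow_one] at h5

lemma K_ne_top : (∑' R : ℕ, ((R : ℝ≥0∞) + 1) * ((2:ℝ≥0∞) ^ R)⁻¹) ≠ ⊤ := by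
  have hterm : ∀ R : ℕ, ((R : ℝ≥0∞) + 1) * ((2:ℝ≥0∞) ^ R)⁻¹
      = ((((R : ℝ≥0) + 1) * (2⁻¹ : ℝ≥0) ^ R : ℝ≥0) : ℝ≥0∞) := by
    intro R
    simp [ENNReal.coe_mul, ENNReal.coe_pow, ENNReal.coe_inv, inv_pow]
  rw [tsum_congr hterm]
  rw [ENNReal.tsum_coe_ne_top_iff_summable]
  rw [← NNReal.summable_coe]
  have hsr : Summable (fun n : ℕ => ((n:ℝ) + 1) * (2⁻¹ : ℝ) ^ n) := by
    have h1 : Summable (fun n : ℕ => (n:ℝ) ^ 1 * (2⁻¹ : ℝ) ^ n) :=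
      summable_pow_mul_geometric_of_norm_lt_one 1 (by norm_num)
    have h2 : Summable (fun n : ℕ => (2⁻¹ : ℝ) ^ n) :=
      summable_geometric_of_lt_one (by norm_num) (by norm_num)
    exact (h1.add h2).congr fun n => by ring
  refine hsr.congr fun n => ?_
  push_cast
  ring

lemma tsum_center_le (t : TreeData V) (c : ℝ≥0∞) (y : V) (R : ℕ) :
    ∑' x : V, ({x' | y ∈ t.tri x' R}).indicator (fun _ => c) x ≤ ((R:ℝ≥0∞) + 1) * c := by
  classical
  set Fy : Finset V := (Finset.range (R+1)).image (fun j => t.pred^[j] y) with hFy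
  have hsub : {x' | y ∈ t.tri x' R} ⊆ ↑Fy := by
    rintro x ⟨j, hj, hx⟩
    simp only [hFy, Finset.coe_image, Finset.coe_range, Set.mem_image, Set.mem_Iio]
    exact ⟨j, Nat.lt_succ_of_le hj, hx⟩
  have hcardFy : (Fy.card : ℝ≥0∞) ≤ (R:ℝ≥0∞) + 1 := by
    have := Finset.card_image_le (s := Finset.range (R+1)) (f := fun j => t.pred^[j] y)
    rw [Finset.card_range] at this
    exact_mod_cast this
  calc ∑' x : V, ({x' | y ∈ t.tri x' R}).indicator (fun _ => c) x
      ≤ ∑' x : V, (↑Fy : Set V).indicator (fun _ => c) x :=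
        ENNReal.tsum_le_tsum fun x =>
          Set.indicator_le_indicator_of_subset hsub (fun _ => zero_le) x
    _ = ∑ x ∈ Fy, (↑Fy : Set V).indicator (fun _ => c) x :=
        tsum_eq_sum (fun v hv => Set.indicator_of_notMem (by simpa using hv) _)
    _ ≤ ∑ _x ∈ Fy, c := Finset.sum_le_sum (fun x hx => by
        rw [Set.indicator_of_mem (by simpa using hx)])
    _ = Fy.card • c := Finset.sum_const c
    _ ≤ ((R:ℝ≥0∞) + 1) * c := by
        rw [nsmul_eq_mul]
        exact mul_le_mul_left hcardFy c

lemma cmax_rpow_le (t : TreeData V) (hthick : t.Thick) {q : ℝ} (hq : 1 ≤ q)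
    (f : V → ℝ) (x : V) :
    t.cmax f x ^ q ≤ ∑' R : ℕ, ((2:ℝ≥0∞) ^ R)⁻¹ * ∑' y : (t.tri x R), (nn f y) ^ q := by
  refine le_trans (iSup_rpow_le_tsum hq _) (ENNReal.tsum_le_tsum fun R => ?_)
  have hfin := t.tri_finite x R
  have hne : (t.tri x R).Nonempty := ⟨x, t.mem_tri_self x R⟩
  have h2n : (2:ℝ≥0∞) ^ R ≤ ((t.tri x R).ncard : ℝ≥0∞) := by
    exact_mod_cast t.two_pow_le_ncard_tri hthick x R
  calc (t.setAvg (t.tri x R) f) ^ q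
      ≤ (∑' y : (t.tri x R), (nn f y) ^ q) / ((t.tri x R).ncard : ℝ≥0∞) :=
        avg_rpow_le hq hfin hne (nn f)
    _ ≤ ((2:ℝ≥0∞) ^ R)⁻¹ * ∑' y : (t.tri x R), (nn f y) ^ q := by
        rw [div_eq_mul_inv, mul_comm]
        exact mul_le_mul_left (ENNReal.inv_le_inv' h2n) _

lemma main_sum (t : TreeData V) (hthick : t.Thick) {q : ℝ} (hq : 1 ≤ q) (f : V → ℝ) :
    ∑' x : V, t.cmax f x ^ q
      ≤ (∑' R : ℕ, ((R:ℝ≥0∞) + 1) * ((2:ℝ≥0∞) ^ R)⁻¹) * ∑' v : V, (nn f v) ^ q := by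
  set g : V → ℝ≥0∞ := fun v => nn f v ^ q with hg
  have inner : ∀ R : ℕ, (∑' x : V, ∑' y : (t.tri x R), g y)
      ≤ ((R:ℝ≥0∞) + 1) * ∑' v : V, g v := by
    intro R
    calc ∑' x : V, ∑' y : (t.tri x R), g y
        = ∑' x : V, ∑' y : V, (t.tri x R).indicator g y :=
          tsum_congr fun x => tsum_subtype _ g
      _ = ∑' y : V, ∑' x : V, (t.tri x R).indicator g y := ENNReal.tsum_comm
      _ ≤ ∑' y : V, ((R:ℝ≥0∞) + 1) * g y := by
          refine ENNReal.tsum_le_tsum fun y => ?_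
          have heq : ∀ x : V, (t.tri x R).indicator g y
              = ({x' | y ∈ t.tri x' R}).indicator (fun _ => g y) x := by
            intro x
            by_cases h : y ∈ t.tri x R <;> simp [Set.indicator, h]
          rw [tsum_congr heq]
          exact t.tsum_center_le (g y) y R
      _ = ((R:ℝ≥0∞) + 1) * ∑' v : V, g v := ENNReal.tsum_mul_left
  calc ∑' x : V, t.cmax f x ^ q
      ≤ ∑' x : V, ∑' R : ℕ, ((2:ℝ≥0∞) ^ R)⁻¹ * ∑' y : (t.tri x R), g y :=
        ENNReal.tsum_le_tsum fun x => t.cmax_rpow_le hthick hq f x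
    _ = ∑' R : ℕ, ∑' x : V, ((2:ℝ≥0∞) ^ R)⁻¹ * ∑' y : (t.tri x R), g y :=
        ENNReal.tsum_comm
    _ = ∑' R : ℕ, ((2:ℝ≥0∞) ^ R)⁻¹ * ∑' x : V, ∑' y : (t.tri x R), g y :=
        tsum_congr fun R => ENNReal.tsum_mul_left
    _ ≤ ∑' R : ℕ, ((2:ℝ≥0∞) ^ R)⁻¹ * (((R:ℝ≥0∞) + 1) * ∑' v : V, g v) :=
        ENNReal.tsum_le_tsum fun R => mul_le_mul_right (inner R) _
    _ = (∑' R : ℕ, ((R:ℝ≥0∞) + 1) * ((2:ℝ≥0∞) ^ R)⁻¹) * ∑' v : V, g v := by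
        rw [← ENNReal.tsum_mul_right]
        exact tsum_congr fun R => by ring

lemma setAvg_le_iSup (t : TreeData V) (f : V → ℝ) (x : V) (R : ℕ) :
    t.setAvg (t.tri x R) f ≤ ⨆ v : V, nn f v := by
  have hfin := t.tri_finite x R
  set M := ⨆ v : V, nn f v with hM
  refine ENNReal.div_le_of_le_mul ?_
  calc ∑' y : (t.tri x R), (‖f y‖₊ : ℝ≥0∞)
      = ∑ y ∈ hfin.toFinset, (‖f y‖₊ : ℝ≥0∞) := tsum_set_eq_sum hfin (fun y => (‖f y‖₊ : ℝ≥0∞))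
    _ ≤ ∑ _y ∈ hfin.toFinset, M := Finset.sum_le_sum fun y _ => le_iSup (fun v => nn f v) y
    _ = hfin.toFinset.card • M := Finset.sum_const M
    _ = M * ((t.tri x R).ncard : ℝ≥0∞) := by
        rw [nsmul_eq_mul, Set.ncard_eq_toFinset_card _ hfin, mul_comm]

end TreeData

end Aux

/-- The centred triangular maximal operator `𝒯` is bounded on `L^p`
for every `p ∈ [1,∞]`. -/
theorem stmt3 {V : Type*} (t : TreeData V) (hthick : t.Thick) (p : ℝ≥0∞) (hp : 1 ≤ p) :
    ∃ C : ℝ≥0∞, C < ∞ ∧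
      ∀ f : V → ℝ, TreeData.eLp p (t.cmax f) ≤ C * TreeData.eLp p (TreeData.nn f) := by
  by_cases hptop : p = ∞
  · refine ⟨1, by norm_num, fun f => ?_⟩
    subst hptop
    rw [one_mul]
    simp only [TreeData.eLp, if_pos rfl]
    exact iSup_le fun x => iSup_le fun R => t.setAvg_le_iSup f x R
  · set q := p.toReal with hqdef
    have hq : 1 ≤ q := by
      have := ENNReal.toReal_mono hptop hp
      simpa using this
    refine ⟨(∑' R : ℕ, ((R:ℝ≥0∞) + 1) * ((2:ℝ≥0∞) ^ R)⁻¹) ^ (1/q),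
      ENNReal.rpow_lt_top_of_nonneg (by positivity) TreeData.K_ne_top, fun f => ?_⟩
    simp only [TreeData.eLp, if_neg hptop]
    have h := TreeData.main_sum t hthick hq f
    have h2 := ENNReal.rpow_le_rpow h (by positivity : (0:ℝ) ≤ 1/q)
    rwa [ENNReal.mul_rpow_of_nonneg _ _ (by positivity : (0:ℝ) ≤ 1/q)] at h2
end

section
/- On the homogeneous tree 𝔗_b, the linearized kernel operator 𝒦 dominating 𝒰 is unbounded on L^p(𝔗_b) for every p ∈ [1, ∞]: with E_n = s^n(p^n(o)) the base of a triangle of height n containing o, one has 𝒦1_{E_n}(x) ≥ ((b−1)/(2b)) n for every x ∈ E_n. -/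
open scoped ENNReal NNReal
open Set

/-- The linearizing kernel `κ(x,y) = sup_{T ∋ x} 1_T(y)/|T|`. -/
noncomputable def TreeData.kappa {V : Type*} (t : TreeData V) (x y : V) : ℝ≥0∞ :=
  ⨆ (v : V) (R : ℕ) (_ : x ∈ t.tri v R),
    (t.tri v R).indicator (fun _ => (1 : ℝ≥0∞)) y / ((t.tri v R).ncard : ℝ≥0∞)

/-- The integral operator `𝒦` with kernel `κ`. -/
noncomputable def TreeData.Kop {V : Type*} (t : TreeData V) (f : V → ℝ≥0∞) (x : V) : ℝ≥0∞ :=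
  ∑' y, t.kappa x y * f y


section Aux

open Finset in
lemma ncard_biUnion_fin {α ι : Type*} (s : Finset ι) (f : ι → Set α)
    (hfin : ∀ i ∈ s, (f i).Finite)
    (hdisj : ∀ i ∈ s, ∀ j ∈ s, i ≠ j → Disjoint (f i) (f j)) :
    (⋃ i ∈ s, f i).ncard = ∑ i ∈ s, (f i).ncard := by
  classical
  induction s using Finset.induction_on with
  | empty => simp
  | @insert a s ha ih =>
    have hfa : (f a).Finite := hfin a (Finset.mem_insert_self a s)
    have hfs : ∀ i ∈ s, (f i).Finite := fun i hi => hfin i (Finset.mem_insert_of_mem hi)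
    have hU : (⋃ i ∈ s, f i).Finite := Set.Finite.biUnion s.finite_toSet hfs
    have hd : Disjoint (f a) (⋃ i ∈ s, f i) := by
      rw [Set.disjoint_iUnion₂_right]
      intro i hi
      exact hdisj a (Finset.mem_insert_self a s) i (Finset.mem_insert_of_mem hi)
        (by rintro rfl; exact ha hi)
    rw [Finset.set_biUnion_insert, Finset.sum_insert ha,
      Set.ncard_union_eq hd hfa hU,
      ih hfs (fun i hi j hj hij =>
        hdisj i (Finset.mem_insert_of_mem hi) j (Finset.mem_insert_of_mem hj) hij)]

lemma tsum_indicator_const' {α : Type*} {E : Set α} (hE : E.Finite) (a : ℝ≥0∞) :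
    ∑' y, E.indicator (fun _ => a) y = E.ncard * a := by
  classical
  rw [tsum_eq_sum (s := hE.toFinset)
    (fun y hy => Set.indicator_of_notMem (by simpa using hy) _)]
  rw [Finset.sum_congr rfl (fun y hy => Set.indicator_of_mem (by simpa using hy) _),
    Finset.sum_const, nsmul_eq_mul]
  congr 1
  rw [Set.ncard_eq_toFinset_card E hE]

namespace TreeData

variable {V : Type*} (t : TreeData V)

lemma ht_iterate (k : ℕ) (x : V) : t.ht (t.pred^[k] x) = t.ht x + k := by
  induction k with
  | zero => simp
  | succ k ih => rw [Function.iterate_succ_apply', t.ht_pred, ih]; push_cast; ring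

lemma iter_eq_of_le {x y : V} {k m : ℕ} (h : t.pred^[k] y = t.pred^[k] x) (hkm : k ≤ m) :
    t.pred^[m] y = t.pred^[m] x := by
  obtain ⟨d, rfl⟩ := Nat.le.dest hkm
  rw [Nat.add_comm, Function.iterate_add_apply, Function.iterate_add_apply, h]

lemma base_zero (x : V) : t.base x 0 = {x} := by
  ext y; simp [TreeData.base]

lemma base_succ_s16 (x : V) (R : ℕ) :
    t.base x (R+1) = ⋃ w ∈ t.succs x, t.base w R := by
  ext y
  simp only [TreeData.base, Set.mem_setOf_eq, Set.mem_iUnion, TreeData.succs]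
  constructor
  · intro h
    exact ⟨t.pred^[R] y, (Function.iterate_succ_apply' t.pred R y).symm.trans h, rfl⟩
  · rintro ⟨w, hw, hyw⟩
    rw [Function.iterate_succ_apply' t.pred R y, hyw, hw]

lemma base_disj {w w' : V} (R : ℕ) (h : w ≠ w') :
    Disjoint (t.base w R) (t.base w' R) :=
  Set.disjoint_left.2 fun y hy hy' => h (hy ▸ hy' ▸ rfl)

lemma base_finite_card {b : ℕ} (hhom : t.Homog b) (R : ℕ) (x : V) :
    (t.base x R).Finite ∧ (t.base x R).ncard = b ^ R := by
  induction R generalizing x with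
  | zero => simp [t.base_zero]
  | succ R ih =>
    classical
    have hsf : (t.succs x).Finite := t.fiber_finite x
    rw [t.base_succ_s16 x R]
    have hrw : (⋃ w ∈ t.succs x, t.base w R) = ⋃ w ∈ hsf.toFinset, t.base w R := by
      simp
    rw [hrw]
    constructor
    · exact Set.Finite.biUnion (hsf.toFinset).finite_toSet (fun w _ => (ih w).1)
    · rw [ncard_biUnion_fin _ _ (fun w _ => (ih w).1)
        (fun i _ j _ hij => t.base_disj R hij)]
      rw [Finset.sum_congr rfl (fun w _ => (ih w).2), Finset.sum_const]
      have : hsf.toFinset.card = b := by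
        rw [← Set.ncard_eq_toFinset_card _ hsf]
        exact hhom x
      rw [this, smul_eq_mul, pow_succ, Nat.mul_comm]

lemma base_subset_succ (x : V) (i : ℕ) :
    t.base (t.pred^[i] x) i ⊆ t.base (t.pred^[i+1] x) (i+1) := by
  intro z hz
  have : t.pred^[i] z = t.pred^[i] x := hz
  show t.pred^[i+1] z = t.pred^[i+1] x
  rw [Function.iterate_succ_apply', Function.iterate_succ_apply', this]

lemma tri_eq_biUnion (x : V) (R : ℕ) :
    t.tri x R = ⋃ j ∈ Finset.range (R+1), t.base x j := by
  ext y
  simp only [TreeData.tri, Set.mem_setOf_eq, Set.mem_iUnion, Finset.mem_range,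
    Nat.lt_succ_iff, TreeData.base]
  tauto

lemma base_level_disj (x : V) {j j' : ℕ} (h : j ≠ j') :
    Disjoint (t.base x j) (t.base x j') := by
  refine Set.disjoint_left.2 fun y hy hy' => h ?_
  have h1 := t.ht_iterate j y
  have h2 := t.ht_iterate j' y
  rw [show t.pred^[j] y = x from hy] at h1
  rw [show t.pred^[j'] y = x from hy'] at h2
  have : (j : ℤ) = j' := by omega
  exact_mod_cast this

lemma geom_sum_le {b : ℕ} (hb : 2 ≤ b) (R : ℕ) :
    ∑ j ∈ Finset.range (R+1), b ^ j ≤ 2 * b ^ R := by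
  induction R with
  | zero => simp
  | succ R ih =>
    rw [Finset.sum_range_succ]
    have h1 : 2 * b ^ R ≤ b ^ (R+1) := by
      calc 2 * b ^ R ≤ b * b ^ R := Nat.mul_le_mul_right _ hb
        _ = b ^ (R+1) := by rw [pow_succ, Nat.mul_comm]
    calc ∑ j ∈ Finset.range (R+1), b ^ j + b ^ (R+1) ≤ 2 * b ^ R + b ^ (R+1) :=
          Nat.add_le_add_right ih _
      _ ≤ b ^ (R+1) + b ^ (R+1) := Nat.add_le_add_right h1 _
      _ = 2 * b ^ (R+1) := by ring

lemma tri_finite_card {b : ℕ} (hb : 2 ≤ b) (hhom : t.Homog b) (x : V) (R : ℕ) :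
    (t.tri x R).Finite ∧ (t.tri x R).ncard ≤ 2 * b ^ R := by
  rw [t.tri_eq_biUnion]
  constructor
  · exact Set.Finite.biUnion (Finset.range (R+1)).finite_toSet
      (fun j _ => (t.base_finite_card hhom j x).1)
  · rw [ncard_biUnion_fin _ _ (fun j _ => (t.base_finite_card hhom j x).1)
      (fun i _ j _ hij => t.base_level_disj x hij)]
    calc ∑ j ∈ Finset.range (R+1), (t.base x j).ncard
        = ∑ j ∈ Finset.range (R+1), b ^ j :=
          Finset.sum_congr rfl (fun j _ => (t.base_finite_card hhom j x).2)
      _ ≤ 2 * b ^ R := geom_sum_le hb R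

lemma self_mem_tri (x : V) (j : ℕ) : x ∈ t.tri (t.pred^[j] x) j := ⟨j, le_rfl, rfl⟩

lemma kappa_ge {b : ℕ} (hb : 2 ≤ b) (hhom : t.Homog b) {x y : V} {j : ℕ}
    (hy : t.pred^[j] y = t.pred^[j] x) :
    ((2 * b ^ j : ℕ) : ℝ≥0∞)⁻¹ ≤ t.kappa x y := by
  set v := t.pred^[j] x
  have hxv : x ∈ t.tri v j := t.self_mem_tri x j
  have hyv : y ∈ t.tri v j := ⟨j, le_rfl, hy⟩
  have hcard := (t.tri_finite_card hb hhom v j).2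
  have h1 : ((2 * b ^ j : ℕ) : ℝ≥0∞)⁻¹ ≤
      (t.tri v j).indicator (fun _ => (1 : ℝ≥0∞)) y / ((t.tri v j).ncard : ℝ≥0∞) := by
    rw [Set.indicator_of_mem hyv, ENNReal.div_eq_inv_mul, mul_one]
    exact ENNReal.inv_le_inv.2 (by exact_mod_cast hcard)
  exact h1.trans (le_iSup_of_le v (le_iSup_of_le j (le_iSup_of_le hxv le_rfl)))

end TreeData

end Aux

/-- On `𝔗_b`, with `E_n = s^n(p^n(o))`,
`𝒦 1_{E_n}(x) ≥ ((b-1)/(2b)) n` for every `x ∈ E_n`; consequently `𝒦` is unbounded on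
`L^p(𝔗_b)` for every `p ∈ [1,∞]`. -/
theorem stmt16 {V : Type*} (t : TreeData V) (b : ℕ) (hb : 2 ≤ b) (hhom : t.Homog b)
    (o : V) :
    (∀ n : ℕ, 1 ≤ n → ∀ x ∈ t.base (t.pred^[n] o) n,
        ((b : ℝ≥0∞) - 1) / (2 * b) * n ≤
          t.Kop ((t.base (t.pred^[n] o) n).indicator fun _ => 1) x) ∧
      ∀ p : ℝ≥0∞, 1 ≤ p →
        ¬ ∃ C : ℝ≥0∞, C < ∞ ∧
            ∀ f : V → ℝ≥0∞, TreeData.eLp p (t.Kop f) ≤ C * TreeData.eLp p f := by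
  classical
  have part1 : ∀ n : ℕ, 1 ≤ n → ∀ x ∈ t.base (t.pred^[n] o) n,
      ((b : ℝ≥0∞) - 1) / (2 * b) * n ≤
        t.Kop ((t.base (t.pred^[n] o) n).indicator fun _ => 1) x := by
    intro n hn x hx
    set En := t.base (t.pred^[n] o) n with hEn
    have hxn : t.pred^[n] x = t.pred^[n] o := hx
    set S : ℕ → Set V := fun i => t.base (t.pred^[i+1] x) (i+1) \ t.base (t.pred^[i] x) i
      with hS
    set a : ℕ → ℝ≥0∞ := fun i => ((2 * b ^ (i+1) : ℕ) : ℝ≥0∞)⁻¹ with ha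
    set f := En.indicator (fun _ => (1:ℝ≥0∞)) with hf
    have hSmem : ∀ i, ∀ y ∈ S i, t.pred^[i+1] y = t.pred^[i+1] x := fun i y hy => hy.1
    have hSfin : ∀ i, (S i).Finite :=
      fun i => ((t.base_finite_card hhom (i+1) _).1).subset Set.diff_subset
    have hSE : ∀ i, i < n → S i ⊆ En := by
      intro i hi y hy
      show t.pred^[n] y = t.pred^[n] o
      rw [t.iter_eq_of_le (hSmem i y hy) hi, hxn]
    have hSdisj : ∀ i j, i < j → ∀ y ∈ S i, y ∉ S j := by
      intro i j hij y hy hyj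
      exact hyj.2 (t.iter_eq_of_le (hSmem i y hy) hij)
    have hScard : ∀ i, (S i).ncard = (b - 1) * b ^ i := by
      intro i
      rw [hS]
      simp only []
      rw [Set.ncard_diff (t.base_subset_succ x i) (t.base_finite_card hhom i _).1,
        (t.base_finite_card hhom (i+1) _).2, (t.base_finite_card hhom i _).2,
        tsub_mul, one_mul, pow_succ, Nat.mul_comm (b ^ i) b]
    have hpt : ∀ y, ∑ i ∈ Finset.range n, (S i).indicator (fun _ => a i) y ≤
        t.kappa x y * f y := by
      intro y
      by_cases hy : ∃ i ∈ Finset.range n, y ∈ S i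
      · obtain ⟨i₀, hi₀, hyS⟩ := hy
        rw [Finset.sum_eq_single_of_mem i₀ hi₀ ?_]
        · rw [Set.indicator_of_mem hyS, hf, Set.indicator_of_mem
            (hSE i₀ (Finset.mem_range.1 hi₀) hyS), mul_one]
          exact t.kappa_ge hb hhom hyS.1
        · intro i _ hne
          apply Set.indicator_of_notMem
          rcases lt_or_gt_of_ne hne with h | h
          · intro hyi; exact hSdisj i i₀ h y hyi hyS
          · exact hSdisj i₀ i h y hyS
      · push_neg at hy
        rw [Finset.sum_eq_zero (fun i hi => Set.indicator_of_notMem (hy i hi) _)]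
        exact zero_le
    have hbne : (b:ℝ≥0∞) ≠ 0 := by exact_mod_cast (by omega : b ≠ 0)
    have hc : ∀ i ∈ Finset.range n,
        ((b : ℝ≥0∞) - 1) / (2 * b) ≤ ((S i).ncard : ℝ≥0∞) * a i := by
      intro i _
      simp only [hScard i, ha]
      have hBne : ((b:ℝ≥0∞)) ^ i ≠ 0 := pow_ne_zero _ hbne
      have hBtop : ((b:ℝ≥0∞)) ^ i ≠ ⊤ := ENNReal.pow_ne_top (ENNReal.natCast_ne_top b)
      have hcast : (((b - 1) * b ^ i : ℕ) : ℝ≥0∞) = ((b:ℝ≥0∞) - 1) * (b:ℝ≥0∞) ^ i := by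
        push_cast [ENNReal.natCast_sub]
        ring
      have hcast2 : ((2 * b ^ (i+1) : ℕ) : ℝ≥0∞) = 2 * (b:ℝ≥0∞) ^ (i+1) := by
        push_cast
        ring
      rw [hcast, hcast2]
      calc ((b:ℝ≥0∞) - 1) / (2 * b)
          = ((b:ℝ≥0∞)^i * ((b:ℝ≥0∞) - 1)) / ((b:ℝ≥0∞)^i * (2 * b)) :=
            (ENNReal.mul_div_mul_left _ _ hBne hBtop).symm
        _ = (((b:ℝ≥0∞) - 1) * (b:ℝ≥0∞)^i) * (2 * (b:ℝ≥0∞) ^ (i+1))⁻¹ := by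
            rw [div_eq_mul_inv, mul_comm ((b:ℝ≥0∞)^i) ((b:ℝ≥0∞) - 1)]
            congr 1
            rw [pow_succ]
            ring
        _ ≤ ((b:ℝ≥0∞) - 1) * (b:ℝ≥0∞)^i * (2 * (b:ℝ≥0∞) ^ (i+1))⁻¹ := le_rfl
    calc ((b : ℝ≥0∞) - 1) / (2 * b) * n
        = ∑ _i ∈ Finset.range n, ((b : ℝ≥0∞) - 1) / (2 * b) := by
          rw [Finset.sum_const, Finset.card_range, nsmul_eq_mul, mul_comm]
      _ ≤ ∑ i ∈ Finset.range n, ((S i).ncard : ℝ≥0∞) * a i := Finset.sum_le_sum hc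
      _ = ∑ i ∈ Finset.range n, ∑' y, (S i).indicator (fun _ => a i) y := by
          refine Finset.sum_congr rfl fun i _ => ?_
          rw [tsum_indicator_const' (hSfin i) (a i)]
      _ = ∑' y, ∑ i ∈ Finset.range n, (S i).indicator (fun _ => a i) y :=
          (Summable.tsum_finsetSum (fun i _ => ENNReal.summable)).symm
      _ ≤ ∑' y, t.kappa x y * f y := ENNReal.tsum_le_tsum hpt
      _ = t.Kop f x := rfl
  refine ⟨part1, ?_⟩
  rintro p hp ⟨C, hC, hbound⟩
  set c : ℝ≥0∞ := ((b : ℝ≥0∞) - 1) / (2 * b) with hcdef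
  have hb1 : (1:ℝ≥0∞) < b := by exact_mod_cast (by omega : 1 < b)
  have h2bne : (2 : ℝ≥0∞) * b ≠ 0 :=
    mul_ne_zero two_ne_zero (by exact_mod_cast (by omega : b ≠ 0))
  have hcne : c ≠ 0 := by
    refine (ENNReal.div_pos ?_ ?_).ne'
    · exact (tsub_pos_iff_lt.2 hb1).ne'
    · exact ENNReal.mul_ne_top (by simp) (ENNReal.natCast_ne_top b)
  have hctop : c ≠ ⊤ := by
    rw [hcdef, div_eq_mul_inv]
    exact ENNReal.mul_ne_top (ne_top_of_le_ne_top (ENNReal.natCast_ne_top b) tsub_le_self)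
      (ENNReal.inv_ne_top.2 h2bne)
  have key : ∀ n : ℕ, 1 ≤ n → c * n ≤ C := by
    intro n hn
    set En := t.base (t.pred^[n] o) n with hEn
    have hEfin : En.Finite := (t.base_finite_card hhom n _).1
    have hEcard : En.ncard = b ^ n := (t.base_finite_card hhom n _).2
    have hEne : En.Nonempty :=
      Set.nonempty_of_ncard_ne_zero (by rw [hEcard]; exact (pow_pos (by omega : 0 < b) n).ne')
    set f := En.indicator (fun _ => (1:ℝ≥0∞)) with hf
    have hK : ∀ x ∈ En, c * n ≤ t.Kop f x := fun x hx => part1 n hn x hx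
    have hbf := hbound f
    by_cases hpT : p = ∞
    · rw [hpT] at hbf
      simp only [TreeData.eLp, if_pos rfl] at hbf
      obtain ⟨x₀, hx₀⟩ := hEne
      have h1 : c * n ≤ ⨆ v, t.Kop f v := (hK x₀ hx₀).trans (le_iSup _ x₀)
      have h2 : (⨆ v, f v) ≤ 1 := iSup_le fun v => by
        by_cases h : v ∈ En <;>
          simp [hf, Set.indicator_of_mem, Set.indicator_of_notMem, h]
      calc c * n ≤ ⨆ v, t.Kop f v := h1
        _ ≤ C * ⨆ v, f v := hbf
        _ ≤ C * 1 := mul_le_mul_right h2 C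
        _ = C := mul_one C
    · have htpos : 0 < p.toReal := ENNReal.toReal_pos (one_pos.trans_le hp).ne' hpT
      simp only [TreeData.eLp, if_neg hpT] at hbf
      have hfpow : ∀ v, f v ^ p.toReal = En.indicator (fun _ => (1:ℝ≥0∞)) v := by
        intro v; by_cases h : v ∈ En
        · simp [hf, Set.indicator_of_mem h, ENNReal.one_rpow]
        · simp [hf, Set.indicator_of_notMem h, ENNReal.zero_rpow_of_pos htpos]
      have hA : ∑' v, f v ^ p.toReal = (En.ncard : ℝ≥0∞) := by
        rw [tsum_congr hfpow, tsum_indicator_const' hEfin, mul_one]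
      have hKlow : ∀ v, En.indicator (fun _ => (c * n) ^ p.toReal) v ≤
          t.Kop f v ^ p.toReal := by
        intro v; by_cases h : v ∈ En
        · rw [Set.indicator_of_mem h]
          exact ENNReal.rpow_le_rpow (hK v h) htpos.le
        · rw [Set.indicator_of_notMem h]; exact zero_le
      have hB : (En.ncard : ℝ≥0∞) * (c * n) ^ p.toReal ≤ ∑' v, t.Kop f v ^ p.toReal := by
        rw [← tsum_indicator_const' hEfin]
        exact ENNReal.tsum_le_tsum hKlow
      set N : ℝ≥0∞ := (En.ncard : ℝ≥0∞) ^ (1/p.toReal) with hN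
      have hNlow : c * n * N ≤ (∑' v, t.Kop f v ^ p.toReal) ^ (1/p.toReal) := by
        calc c * ↑n * N = ((c * ↑n) ^ p.toReal) ^ (1/p.toReal) * N := by
              rw [← ENNReal.rpow_mul, mul_one_div_cancel htpos.ne', ENNReal.rpow_one]
          _ = ((En.ncard : ℝ≥0∞) * (c * ↑n) ^ p.toReal) ^ (1/p.toReal) := by
              rw [ENNReal.mul_rpow_of_nonneg _ _ (one_div_pos.2 htpos).le, hN, mul_comm]
          _ ≤ _ := ENNReal.rpow_le_rpow hB (one_div_pos.2 htpos).le
      have hup : (∑' v, t.Kop f v ^ p.toReal) ^ (1/p.toReal) ≤ C * N := by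
        rw [hN, ← hA]; exact hbf
      have hNcpos : (0:ℝ≥0∞) < (En.ncard : ℝ≥0∞) := by
        rw [hEcard]; exact_mod_cast pow_pos (by omega : 0 < b) n
      have hNne : N ≠ 0 := (ENNReal.rpow_pos hNcpos (ENNReal.natCast_ne_top _)).ne'
      have hNtop : N ≠ ⊤ :=
        ENNReal.rpow_ne_top_of_nonneg (one_div_pos.2 htpos).le (ENNReal.natCast_ne_top _)
      exact (ENNReal.mul_le_mul_iff_left hNne hNtop).1 (hNlow.trans hup)
  obtain ⟨m, hm⟩ := ENNReal.exists_nat_gt (show C / c ≠ ∞ by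
    rw [div_eq_mul_inv]
    exact ENNReal.mul_ne_top hC.ne (ENNReal.inv_ne_top.2 hcne))
  have hmn : C < c * ((m+1 : ℕ) : ℝ≥0∞) := by
    have h1 : C / c < ((m+1 : ℕ) : ℝ≥0∞) :=
      hm.trans_le (by exact_mod_cast Nat.le_succ m)
    rw [ENNReal.div_lt_iff (Or.inl hcne) (Or.inl hctop)] at h1
    rwa [mul_comm] at h1
  exact absurd (key (m+1) (by omega)) (not_le.2 hmn)
end
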